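/- arXiv:2311.10180 — 7 statements merged into one kernel-verified Lean document; each statement's English description precedes it below -/
import Mathlib

section
/- (Hivert) Let w be a word of length n over the positive integers and let χ(w) be its weakly increasing rearrangement. For every permutation τ of {1,…,n} such that w(p) = χ(w)(τ(p)) for all p ∈ {1,…,n}, the inversion set of st(w) is contained in the inversion set of τ. In other words, st(w) is the smallest permutation for the right weak order (inversion-set containment) among permutations τ with w = χ(w)·τ. -/
/-- Increment by `α` every letter strictly greater than `β`. -/
def Inc (α β : ℕ) (u : List ℕ) : List ℕ := u.map fun a => if β < a then a + α else a

/-- Maximal letter of a word. -/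
def maxLetter (v : List ℕ) : ℕ := v.foldr max 0

/-- A packed word whose letter set is exactly `{1, …, k}`. -/
def IsPackedOn (k : ℕ) (w : List ℕ) : Prop := w.toFinset = Finset.Icc 1 k

/-- A packed word. -/
def IsPacked (w : List ℕ) : Prop := ∃ k, IsPackedOn k w

/-- A permutation of `{1, …, n}` identified with the word `σ(1) ⋯ σ(n)`. -/
def IsPermWord (n : ℕ) (σ : List ℕ) : Prop :=
  σ.length = n ∧ σ.toFinset = Finset.Icc 1 n

/-- `σ` is the standardization of `w`: a permutation word of `{1, …, n}` with the same
inversions as `w` (0-based indexing). -/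
def IsStdOf (w σ : List ℕ) : Prop :=
  IsPermWord w.length σ ∧
    ∀ i j : ℕ, i < j → j < w.length →
      (w.getD j 0 < w.getD i 0 ↔ σ.getD j 0 < σ.getD i 0)

/-- The weakly increasing rearrangement (composition type) of a word. -/
def chi (w : List ℕ) : List ℕ := List.insertionSort (· ≤ ·) w

/-- Right composition `u ∘→_i v` of packed words (`i` is 1-based). -/
def rightComp (u : List ℕ) (i : ℕ) (v : List ℕ) : List ℕ :=
  Inc (maxLetter v - 1) (u.getD (i - 1) 0) (u.take (i - 1))
    ++ Inc (u.getD (i - 1) 0 - 1) 0 v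
    ++ Inc (maxLetter v - 1) (u.getD (i - 1) 0 - 1) (u.drop i)

/-- Left composition `u ∘←_i v` of packed words: replace in `Inc (m-1) i u` every
occurrence of the letter `i` by the word `Inc (i-1) 0 v`, where `m` is the maximal
letter of `v`. -/
def leftComp (u : List ℕ) (i : ℕ) (v : List ℕ) : List ℕ :=
  u.flatMap fun a =>
    if a = i then Inc (i - 1) 0 v else [if i < a then a + (maxLetter v - 1) else a]

/-- Block composition `B_i(α, β)` of permutation words (`i` is 1-based, `β` a permutation
of `{1, …, m}` with `m = β.length`). -/
def blockComp (α : List ℕ) (i : ℕ) (β : List ℕ) : List ℕ :=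
  Inc (β.length - 1) (α.getD (i - 1) 0) (α.take (i - 1))
    ++ Inc (α.getD (i - 1) 0 - 1) 0 β
    ++ Inc (β.length - 1) (α.getD (i - 1) 0 - 1) (α.drop i)

/-- The inverse of a permutation word. -/
def invWord (σ : List ℕ) : List ℕ :=
  (List.range σ.length).map fun p => σ.idxOf (p + 1) + 1

/-- The right action of a permutation word `σ` of `{1, …, n}` on a packed word with
letter set `{1, …, n}`: the `p`-th letter of `u · σ` is `σ⁻¹(u(p))`. -/
def permAct (u σ : List ℕ) : List ℕ := u.map fun a => (invWord σ).getD (a - 1) 0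

/-- The identity permutation word of `{1, …, m}`. -/
def idWord (m : ℕ) : List ℕ := (List.range m).map (· + 1)

/-- `First k u`: keep only the `k` leftmost occurrences of each letter of `u`. -/
def First (k : ℕ) (u : List ℕ) : List ℕ :=
  (List.range u.length).filterMap fun p =>
    if (u.take p).count (u.getD p 0) < k then some (u.getD p 0) else none


/-- Hivert: `st(w)` is the smallest permutation `τ` (for the right weak order, i.e.
inversion-set containment) such that `w = χ(w) · τ`. -/
theorem std_minimal_for_right_weak_order (w σ τ : List ℕ) (hw : ∀ a ∈ w, 0 < a)
    (hσ : IsStdOf w σ) (hτ : IsPermWord w.length τ)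
    (hfact : ∀ p < w.length, w.getD p 0 = (chi w).getD (τ.getD p 0 - 1) 0) :
    ∀ i j : ℕ, i < j → j < w.length →
      σ.getD j 0 < σ.getD i 0 → τ.getD j 0 < τ.getD i 0 := by
  intro i j hij hj hσij
  have hi : i < w.length := hij.trans hj
  have hwij : w.getD j 0 < w.getD i 0 := (hσ.2 i j hij hj).mpr hσij
  have hlen : τ.length = w.length := hτ.1
  have hchilen : (chi w).length = w.length := List.length_insertionSort _ _
  have hmem : ∀ p, p < w.length → 1 ≤ τ.getD p 0 ∧ τ.getD p 0 ≤ w.length := by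
    intro p hp
    have hmem' : τ.getD p 0 ∈ τ := by
      rw [List.getD_eq_getElem _ _ (by omega)]
      exact List.getElem_mem _
    have := List.mem_toFinset.mpr hmem'
    rw [hτ.2, Finset.mem_Icc] at this
    exact this
  have hτi := hmem i hi
  have hτj := hmem j hj
  have hsorted : List.Pairwise (· ≤ ·) (chi w) := List.pairwise_insertionSort _ _
  have hmono : ∀ p q, p < w.length → q < w.length → τ.getD p 0 ≤ τ.getD q 0 →
      w.getD p 0 ≤ w.getD q 0 := by
    intro p q hp hq hpq
    have hτp := hmem p hp
    have hτq := hmem q hq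
    rw [hfact p hp, hfact q hq]
    rw [List.getD_eq_getElem _ _ (show τ.getD p 0 - 1 < (chi w).length by omega),
      List.getD_eq_getElem _ _ (show τ.getD q 0 - 1 < (chi w).length by omega)]
    exact hsorted.rel_get_of_le (by simp only [Fin.mk_le_mk]; omega)
  by_contra hle
  push_neg at hle
  have := hmono i j hi hj hle
  omega
end

section
/- Let u be a packed word of length n with letter set {1,…,r}, let i ∈ {1,…,n}, and let v be a packed word of length m with letter set {1,…,s}. Then the right composition u ∘→_i v := Inc_{s−1}^{u(i)}(u(1,…,i−1)) · Inc_{u(i)−1}^{0}(v) · Inc_{s−1}^{u(i)−1}(u(i+1,…,n)) is a packed word of length n+m−1 with letter set {1,…,r+s−1}. -/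
lemma maxLetter_cons (b : ℕ) (t : List ℕ) : maxLetter (b :: t) = max b (maxLetter t) := rfl

lemma le_maxLetter {v : List ℕ} {a : ℕ} (h : a ∈ v) : a ≤ maxLetter v := by
  induction v with
  | nil => simp at h
  | cons b t ih =>
    rw [maxLetter_cons]
    rcases List.mem_cons.1 h with h | h
    · omega
    · have := ih h; omega

lemma maxLetter_mem {v : List ℕ} (h : v ≠ []) : maxLetter v ∈ v := by
  induction v with
  | nil => simp at h
  | cons b t ih =>
    rw [maxLetter_cons]
    rcases eq_or_ne t [] with rfl | ht
    · simp [maxLetter]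
    · have hm := ih ht
      rcases le_total (maxLetter t) b with h1 | h1
      · rw [max_eq_left h1]; exact List.mem_cons_self
      · rw [max_eq_right h1]; exact List.mem_cons_of_mem _ hm

/-- The right composition of packed words is a packed word of length `n + m - 1` with
letter set `{1, …, r + s - 1}`. -/
theorem rightComp_isPacked (n m r s i : ℕ) (u v : List ℕ)
    (hu : IsPackedOn r u) (hun : u.length = n) (hi : i ∈ Finset.Icc 1 n)
    (hv : IsPackedOn s v) (hvm : v.length = m) (hm : 1 ≤ m) :
    (rightComp u i v).length = n + m - 1 ∧ IsPackedOn (r + s - 1) (rightComp u i v) := by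
  obtain ⟨hi1, hin⟩ := Finset.mem_Icc.1 hi
  have hn : 1 ≤ n := le_trans hi1 hin
  have hvne : v ≠ [] := by
    intro h; rw [h] at hvm; simp at hvm; omega
  have hune : u ≠ [] := by
    intro h; rw [h] at hun; simp at hun; omega
  have memIccU : ∀ t, t ∈ u ↔ 1 ≤ t ∧ t ≤ r := fun t => by
    rw [← List.mem_toFinset, hu, Finset.mem_Icc]
  have memIccV : ∀ t, t ∈ v ↔ 1 ≤ t ∧ t ≤ s := fun t => by
    rw [← List.mem_toFinset, hv, Finset.mem_Icc]
  have hs1 : 1 ≤ s := by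
    obtain ⟨a, ha⟩ := List.exists_mem_of_ne_nil v hvne
    have := (memIccV a).1 ha; omega
  have hr1 : 1 ≤ r := by
    obtain ⟨a, ha⟩ := List.exists_mem_of_ne_nil u hune
    have := (memIccU a).1 ha; omega
  have hmax : maxLetter v = s := by
    have h1 := (memIccV _).1 (maxLetter_mem hvne)
    have h2 : s ∈ v := (memIccV s).2 ⟨hs1, le_refl s⟩
    have := le_maxLetter h2
    omega
  set c := u.getD (i - 1) 0 with hcdef
  have hic : i - 1 < u.length := by omega
  have hceq : c = u[i - 1] := List.getD_eq_getElem u 0 hic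
  have hcmem : c ∈ u := hceq ▸ List.getElem_mem hic
  obtain ⟨hc1, hcr⟩ := (memIccU c).1 hcmem
  have memu : ∀ t, t ∈ u ↔ t ∈ u.take (i - 1) ∨ t = c ∨ t ∈ u.drop i := by
    intro t
    conv_lhs => rw [← List.take_append_drop (i - 1) u]
    rw [List.drop_eq_getElem_cons hic]
    have h1 : i - 1 + 1 = i := by omega
    rw [h1, hceq]
    simp [List.mem_append]
  constructor
  · simp only [rightComp, Inc, List.length_append, List.length_map, List.length_take,
      List.length_drop, hun, hvm]
    omega
  · unfold IsPackedOn
    ext x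
    simp only [rightComp, Inc, hmax, List.mem_toFinset, List.mem_append, List.mem_map,
      Finset.mem_Icc, ← hcdef]
    constructor
    · rintro ((⟨a, ha, h⟩ | ⟨a, ha, h⟩) | ⟨a, ha, h⟩)
      · have := (memIccU a).1 (List.mem_of_mem_take ha)
        split at h <;> omega
      · have := (memIccV a).1 ha
        split at h <;> omega
      · have := (memIccU a).1 (List.mem_of_mem_drop ha)
        split at h <;> omega
    · rintro ⟨hx1, hx2⟩
      by_cases h1 : x < c
      · have hxu : x ∈ u := (memIccU x).2 ⟨hx1, by omega⟩
        rcases (memu x).1 hxu with h | h | h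
        · exact Or.inl (Or.inl ⟨x, h, by rw [if_neg (by omega)]⟩)
        · omega
        · exact Or.inr ⟨x, h, by rw [if_neg (by omega)]⟩
      · by_cases h2 : x ≤ c + s - 1
        · refine Or.inl (Or.inr ⟨x - c + 1, (memIccV _).2 ⟨by omega, by omega⟩, ?_⟩)
          rw [if_pos (by omega)]; omega
        · have hxu : x - s + 1 ∈ u := (memIccU _).2 ⟨by omega, by omega⟩
          rcases (memu _).1 hxu with h | h | h
          · refine Or.inl (Or.inl ⟨x - s + 1, h, ?_⟩)
            rw [if_pos (by omega)]; omega
          · omega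
          · refine Or.inr ⟨x - s + 1, h, ?_⟩
            rw [if_pos (by omega)]; omega
end

section
/- The right composition of packed words satisfies the parallel (disjoint) associativity axiom: for a packed word u of length n, packed words v of length m and w of length p, and indices 1 ≤ i < j ≤ n, one has (u ∘→_j w) ∘→_i v = (u ∘→_i v) ∘→_{j+m−1} w. -/
lemma Inc_length (α β : ℕ) (l : List ℕ) : (Inc α β l).length = l.length := by simp [Inc]

lemma Inc_append (α β : ℕ) (l₁ l₂ : List ℕ) :
    Inc α β (l₁ ++ l₂) = Inc α β l₁ ++ Inc α β l₂ := by simp [Inc]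

lemma Inc_take (α β n : ℕ) (l : List ℕ) : (Inc α β l).take n = Inc α β (l.take n) := by
  simp [Inc]

lemma Inc_drop (α β n : ℕ) (l : List ℕ) : (Inc α β l).drop n = Inc α β (l.drop n) := by
  simp [Inc]

lemma getD_eq (l : List ℕ) (n : ℕ) (h : n < l.length) : l.getD n 0 = l[n] := by
  simp [List.getD_eq_getElem?_getD, List.getElem?_eq_getElem h]

lemma mem_le_maxLetter {x : ℕ} {v : List ℕ} (h : x ∈ v) : x ≤ maxLetter v := by
  induction v with
  | nil => cases h
  | cons a l ih =>
    rcases List.mem_cons.1 h with rfl | h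
    · exact le_max_left _ _
    · exact le_trans (ih h) (le_max_right _ _)

lemma packed_one_le {k : ℕ} {v : List ℕ} (hk : IsPackedOn k v) {x : ℕ} (h : x ∈ v) :
    1 ≤ x := by
  have : x ∈ v.toFinset := List.mem_toFinset.2 h
  rw [hk] at this
  exact (Finset.mem_Icc.1 this).1

/-- Parallel (disjoint) associativity for the right composition of packed words. -/
theorem rightComp_parallel_assoc (u v w : List ℕ)
    (hu : IsPacked u) (hv : IsPacked v) (hw : IsPacked w) (i j : ℕ)
    (h1 : 1 ≤ i) (hij : i < j) (hj : j ≤ u.length)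
    (hv1 : 1 ≤ v.length) (hw1 : 1 ≤ w.length) :
    rightComp (rightComp u j w) i v
      = rightComp (rightComp u i v) (j + v.length - 1) w := by
  obtain ⟨ku, hku⟩ := hu
  obtain ⟨kv, hkv⟩ := hv
  obtain ⟨kw, hkw⟩ := hw
  have hvne : v ≠ [] := by intro h; rw [h] at hv1; simp at hv1
  have hwne : w ≠ [] := by intro h; rw [h] at hw1; simp at hw1
  set s := maxLetter v with hs
  set t := maxLetter w with ht
  set m := v.length with hm
  set a := u.getD (i-1) 0 with haa
  set b := u.getD (j-1) 0 with hbb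
  have hin : i - 1 < u.length := by omega
  have hjn : j - 1 < u.length := by omega
  have hvm : ∀ x ∈ v, 1 ≤ x ∧ x ≤ s := fun x hx => ⟨packed_one_le hkv hx, mem_le_maxLetter hx⟩
  have hwm : ∀ x ∈ w, 1 ≤ x ∧ x ≤ t := fun x hx => ⟨packed_one_le hkw hx, mem_le_maxLetter hx⟩
  have hs1 : 1 ≤ s := by
    obtain ⟨x, hx⟩ := List.exists_mem_of_ne_nil v hvne
    exact le_trans (hvm x hx).1 (hvm x hx).2
  have ht1 : 1 ≤ t := by
    obtain ⟨x, hx⟩ := List.exists_mem_of_ne_nil w hwne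
    exact le_trans (hwm x hx).1 (hwm x hx).2
  have ha1 : 1 ≤ a := packed_one_le hku (by rw [haa, getD_eq u _ hin]; exact List.getElem_mem _)
  have hb1 : 1 ≤ b := packed_one_le hku (by rw [hbb, getD_eq u _ hjn]; exact List.getElem_mem _)
  set X := rightComp u j w with hX
  set Y := rightComp u i v with hY
  -- structure of X
  have hXdef : X = Inc (t-1) b (u.take (j-1)) ++ (Inc (b-1) 0 w ++ Inc (t-1) (b-1) (u.drop j)) := by
    rw [hX, rightComp, List.append_assoc]
  have hlen1 : (Inc (t-1) b (u.take (j-1))).length = j - 1 := by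
    rw [Inc_length, List.length_take]; omega
  have hXget : X.getD (i-1) 0 = (if b < a then a + (t-1) else a) := by
    rw [hXdef, List.getD_eq_getElem?_getD,
      List.getElem?_append_left (by rw [hlen1]; omega)]
    simp only [Inc, List.getElem?_map, List.getElem?_take_of_lt (show i-1 < j-1 by omega),
      List.getElem?_eq_getElem hin, Option.map_some, Option.getD_some]
    rw [haa, getD_eq u _ hin]
  have hXtake : X.take (i-1) = Inc (t-1) b (u.take (i-1)) := by
    rw [hXdef, List.take_append_of_le_length (by rw [hlen1]; omega), Inc_take,
      List.take_take, min_eq_left (by omega)]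
  have hXdrop : X.drop i = Inc (t-1) b ((u.drop i).take (j-1-i))
      ++ (Inc (b-1) 0 w ++ Inc (t-1) (b-1) (u.drop j)) := by
    rw [hXdef, List.drop_append_of_le_length (by rw [hlen1]; omega), Inc_drop,
      List.drop_take]
  -- structure of Y
  have hYdef : Y = Inc (s-1) a (u.take (i-1)) ++ (Inc (a-1) 0 v ++ Inc (s-1) (a-1) (u.drop i)) := by
    rw [hY, rightComp, List.append_assoc]
  have hlen2 : (Inc (s-1) a (u.take (i-1))).length = i - 1 := by
    rw [Inc_length, List.length_take]; omega
  have hlen3 : (Inc (a-1) 0 v).length = m := by rw [Inc_length]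
  have hYget : Y.getD (j + m - 1 - 1) 0 = (if a ≤ b then b + (s-1) else b) := by
    rw [hYdef, List.getD_eq_getElem?_getD,
      List.getElem?_append_right (by rw [hlen2]; omega),
      List.getElem?_append_right (by rw [hlen3]; omega), hlen2, hlen3]
    simp only [Inc, List.getElem?_map, List.getElem?_drop]
    have hidx : i + (j + m - 1 - 1 - (i-1) - m) = j - 1 := by omega
    rw [hidx, List.getElem?_eq_getElem hjn]
    simp only [Option.map_some, Option.getD_some]
    rw [hbb, getD_eq u _ hjn]
    split_ifs <;> omega
  have hYtake : Y.take (j + m - 1 - 1) = Inc (s-1) a (u.take (i-1))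
      ++ (Inc (a-1) 0 v ++ Inc (s-1) (a-1) ((u.drop i).take (j-1-i))) := by
    rw [hYdef, List.take_append, List.take_append,
      List.take_of_length_le (l := Inc (s-1) a (u.take (i-1))) (by rw [hlen2]; omega),
      List.take_of_length_le (l := Inc (a-1) 0 v) (by rw [hlen3, hlen2]; omega),
      hlen2, hlen3, Inc_take]
    have hidx : j + m - 1 - 1 - (i-1) - m = j - 1 - i := by omega
    rw [hidx]
  have hYdrop : Y.drop (j + m - 1) = Inc (s-1) (a-1) (u.drop j) := by
    rw [hYdef, List.drop_append, List.drop_append,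
      List.drop_eq_nil_of_le (by rw [hlen2]; omega),
      List.drop_eq_nil_of_le (by rw [hlen3, hlen2]; omega),
      hlen2, hlen3, Inc_drop, List.drop_drop]
    have hidx : i + (j + m - 1 - (i-1) - m) = j := by omega
    rw [hidx, List.nil_append, List.nil_append]
  -- segment identities
  have e1 : Inc (s-1) (if b < a then a + (t-1) else a) (Inc (t-1) b (u.take (i-1)))
      = Inc (t-1) (if a ≤ b then b + (s-1) else b) (Inc (s-1) a (u.take (i-1))) := by
    simp only [Inc, List.map_map]
    refine List.map_congr_left fun x hx => ?_
    have hx1 : 1 ≤ x := packed_one_le hku (List.mem_of_mem_take hx)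
    simp only [Function.comp]
    split_ifs <;> omega
  have e2 : Inc ((if b < a then a + (t-1) else a) - 1) 0 v
      = Inc (t-1) (if a ≤ b then b + (s-1) else b) (Inc (a-1) 0 v) := by
    simp only [Inc, List.map_map]
    refine List.map_congr_left fun x hx => ?_
    obtain ⟨hx1, hx2⟩ := hvm x hx
    simp only [Function.comp]
    split_ifs <;> omega
  have e3 : Inc (s-1) ((if b < a then a + (t-1) else a) - 1)
        (Inc (t-1) b ((u.drop i).take (j-1-i)))
      = Inc (t-1) (if a ≤ b then b + (s-1) else b)
        (Inc (s-1) (a-1) ((u.drop i).take (j-1-i))) := by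
    simp only [Inc, List.map_map]
    refine List.map_congr_left fun x hx => ?_
    have hx1 : 1 ≤ x :=
      packed_one_le hku (List.mem_of_mem_drop (List.mem_of_mem_take hx))
    simp only [Function.comp]
    split_ifs <;> omega
  have e4 : Inc (s-1) ((if b < a then a + (t-1) else a) - 1) (Inc (b-1) 0 w)
      = Inc ((if a ≤ b then b + (s-1) else b) - 1) 0 w := by
    simp only [Inc, List.map_map]
    refine List.map_congr_left fun x hx => ?_
    obtain ⟨hx1, hx2⟩ := hwm x hx
    simp only [Function.comp]
    split_ifs <;> omega
  have e5 : Inc (s-1) ((if b < a then a + (t-1) else a) - 1) (Inc (t-1) (b-1) (u.drop j))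
      = Inc (t-1) ((if a ≤ b then b + (s-1) else b) - 1) (Inc (s-1) (a-1) (u.drop j)) := by
    simp only [Inc, List.map_map]
    refine List.map_congr_left fun x hx => ?_
    have hx1 : 1 ≤ x := packed_one_le hku (List.mem_of_mem_drop hx)
    simp only [Function.comp]
    split_ifs <;> omega
  -- assemble
  rw [rightComp, rightComp, ← hs, ← ht]
  rw [hXget, hXtake, hXdrop, hYget, hYtake, hYdrop]
  rw [Inc_append, Inc_append, Inc_append, Inc_append]
  rw [e1, e2, e3, e4, e5]
  simp [List.append_assoc]
end

section
/- The left composition of packed words satisfies the parallel (disjoint) associativity axiom: for a packed word u with letter set {1,…,n}, packed words v with letter set {1,…,m} and w with letter set {1,…,p}, and indices 1 ≤ i < j ≤ n, one has (u ∘←_j w) ∘←_i v = (u ∘←_i v) ∘←_{j+m−1} w. -/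
lemma my_le_foldr_max {a : ℕ} : ∀ {l : List ℕ}, a ∈ l → a ≤ l.foldr max 0
  | b :: t, h => by
    rcases List.mem_cons.mp h with h | h
    · simp [h, le_max_iff]
    · exact le_trans (my_le_foldr_max h) (by simp [le_max_iff])

lemma my_foldr_max_le {l : List ℕ} {k : ℕ} (h : ∀ a ∈ l, a ≤ k) : l.foldr max 0 ≤ k := by
  induction l with
  | nil => simp
  | cons b t ih =>
    simp only [List.foldr_cons, max_le_iff]
    exact ⟨h b (by simp), ih fun a ha => h a (by simp [ha])⟩

lemma mem_bounds_of_packed {k : ℕ} {l : List ℕ} (h : IsPackedOn k l) :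
    ∀ a ∈ l, 1 ≤ a ∧ a ≤ k := by
  intro a ha
  have : a ∈ l.toFinset := List.mem_toFinset.mpr ha
  rw [h] at this
  simpa using Finset.mem_Icc.mp this

lemma maxLetter_of_packed {k : ℕ} {l : List ℕ} (h : IsPackedOn k l) (hk : 1 ≤ k) :
    maxLetter l = k := by
  have hk_mem : k ∈ l := by
    rw [← List.mem_toFinset, h]
    simp [Finset.mem_Icc, hk]
  refine le_antisymm (my_foldr_max_le fun a ha => (mem_bounds_of_packed h a ha).2)
    (my_le_foldr_max hk_mem)

lemma my_flatMap_flatMap {α β γ : Type*} (l : List α) (f : α → List β) (g : β → List γ) :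
    (l.flatMap f).flatMap g = l.flatMap fun a => (f a).flatMap g := by
  induction l with
  | nil => rfl
  | cons a t ih => simp [List.flatMap_cons, ih]

lemma my_flatMap_congr {α β : Type*} {l : List α} {f g : α → List β}
    (h : ∀ a ∈ l, f a = g a) : l.flatMap f = l.flatMap g := by
  induction l with
  | nil => rfl
  | cons a t ih =>
    simp only [List.flatMap_cons]
    rw [h a (by simp), ih fun a ha => h a (by simp [ha])]

lemma my_flatMap_single {α β : Type*} {l : List α} {f : α → List β} {g : α → β}
    (h : ∀ a ∈ l, f a = [g a]) : l.flatMap f = l.map g := by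
  induction l with
  | nil => rfl
  | cons a t ih =>
    simp only [List.flatMap_cons, List.map_cons]
    rw [h a (by simp), ih fun a ha => h a (by simp [ha])]
    rfl

/-- Parallel (disjoint) associativity for the left composition of packed words. -/
theorem leftComp_parallel_assoc (n m p i j : ℕ) (u v w : List ℕ)
    (hu : IsPackedOn n u) (hv : IsPackedOn m v) (hw : IsPackedOn p w)
    (h1 : 1 ≤ i) (hij : i < j) (hj : j ≤ n) (hm : 1 ≤ m) (hp : 1 ≤ p) :
    leftComp (leftComp u j w) i v = leftComp (leftComp u i v) (j + m - 1) w := by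
  have hmv : maxLetter v = m := maxLetter_of_packed hv hm
  have hmw : maxLetter w = p := maxLetter_of_packed hw hp
  have hvb := mem_bounds_of_packed hv
  have hwb := mem_bounds_of_packed hw
  have hub := mem_bounds_of_packed hu
  unfold leftComp
  rw [hmv, hmw, my_flatMap_flatMap, my_flatMap_flatMap]
  apply my_flatMap_congr
  intro a ha
  obtain ⟨ha1, ha2⟩ := hub a ha
  by_cases haj : a = j
  · subst haj
    have hne : a ≠ i := by omega
    rw [if_pos rfl, if_neg hne, if_pos hij]
    -- LHS: (Inc (j-1) 0 w).flatMap f ; RHS: h (j + (m-1))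
    unfold Inc
    rw [List.flatMap_map]
    have h1 : a + (m - 1) = a + m - 1 := by omega
    rw [h1, List.flatMap_cons, List.flatMap_nil, List.append_nil, if_pos rfl]
    apply my_flatMap_single
    intro c hc
    obtain ⟨hc1, hc2⟩ := hwb c hc
    rw [if_pos (by omega : 0 < c), if_neg (by omega : ¬ c + (a - 1) = i),
      if_pos (by omega : i < c + (a - 1)), if_pos (by omega : 0 < c)]
    congr 1
    omega
  · rw [if_neg haj]
    by_cases hai : a = i
    · subst hai
      rw [if_neg (by omega : ¬ j < a), List.flatMap_cons, List.flatMap_nil,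
        List.append_nil, if_pos rfl]
      unfold Inc
      rw [List.flatMap_map]
      symm
      apply my_flatMap_single
      intro b hb
      obtain ⟨hb1, hb2⟩ := hvb b hb
      rw [if_pos (by omega : 0 < b), if_neg (by omega : ¬ b + (a - 1) = j + m - 1),
        if_neg (by omega : ¬ j + m - 1 < b + (a - 1))]
    · rw [if_neg hai]
      by_cases hja : j < a
      · rw [if_pos hja, List.flatMap_cons, List.flatMap_nil, List.append_nil,
          if_neg (by omega : ¬ a + (p - 1) = i), if_pos (by omega : i < a + (p - 1)),
          if_pos (by omega : i < a), List.flatMap_cons, List.flatMap_nil, List.append_nil,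
          if_neg (by omega : ¬ a + (m - 1) = j + m - 1),
          if_pos (by omega : j + m - 1 < a + (m - 1))]
        congr 1
        omega
      · rw [if_neg hja, List.flatMap_cons, List.flatMap_nil, List.append_nil,
          if_neg hai]
        by_cases hia : i < a
        · rw [if_pos hia, List.flatMap_cons, List.flatMap_nil, List.append_nil,
            if_neg (by omega : ¬ a + (m - 1) = j + m - 1),
            if_neg (by omega : ¬ j + m - 1 < a + (m - 1))]
        · rw [if_neg hia, List.flatMap_cons, List.flatMap_nil, List.append_nil,
            if_neg (by omega : ¬ a = j + m - 1), if_neg (by omega : ¬ j + m - 1 < a)]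
end

section
/- The one-letter packed word 1 is a two-sided unit for the left composition of packed words: for every packed word u with letter set {1,…,n} and every i ∈ {1,…,n}, u ∘←_i 1 = u, and for every packed word v, 1 ∘←_1 v = v. -/
/-- The one-letter packed word `1` is a two-sided unit for the left composition. -/
theorem leftComp_unit :
    (∀ (n : ℕ) (u : List ℕ), IsPackedOn n u → ∀ i ∈ Finset.Icc 1 n,
      leftComp u i [1] = u) ∧
    (∀ (m : ℕ) (v : List ℕ), IsPackedOn m v → 1 ≤ m → leftComp [1] 1 v = v) := by
  constructor
  · intro n u hu i hi
    simp only [Finset.mem_Icc] at hi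
    have : ∀ a ∈ u, (if a = i then Inc (i-1) 0 [1] else [if i < a then a + (maxLetter [1] - 1) else a]) = [a] := by
      intro a ha
      by_cases h : a = i
      · subst h
        simp only [Inc, maxLetter, List.map]; norm_num; omega
      · simp [h, maxLetter]
    calc leftComp u i [1] = u.flatMap (fun a => [a]) := by
          unfold leftComp
          exact List.flatMap_congr (by intro a ha; exact this a ha)
      _ = u := List.flatMap_singleton' u
  · intro m v _ _
    simp [leftComp, Inc]
end

section
/- For every k ≥ 1, the relation ≡_k is a congruence for the left composition of packed words: for packed words u, u' with letter set {1,…,n}, packed words v, v' with letter set {1,…,m}, and i ∈ {1,…,n}, if First_k(u) = First_k(u') and First_k(v) = First_k(v'), then First_k(u ∘←_i v) = First_k(u' ∘←_i v'). -/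
/-- One-step rewriting relation on words: `u·a·b·v ↔ u·b·a·v` whenever `P u a b v` holds. -/
def StepRel (P : List ℕ → ℕ → ℕ → List ℕ → Prop) (x y : List ℕ) : Prop :=
  ∃ u a b v, P u a b v ∧ x = u ++ a :: b :: v ∧ y = u ++ b :: a :: v

/-- `≡_P`: the reflexive, symmetric, transitive closure of the one-step relation. -/
def EquivP (P : List ℕ → ℕ → ℕ → List ℕ → Prop) : List ℕ → List ℕ → Prop :=
  Relation.EqvGen (StepRel P)

/-- `P` is compatible with subwords. -/
def SubwordCompat (P : List ℕ → ℕ → ℕ → List ℕ → Prop) : Prop :=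
  ∀ u a b v u' v', P u a b v → u.Sublist u' → v.Sublist v' → P u' a b v'

/-- `P` is compatible with relabeling by strictly monotone maps of the positive integers. -/
def RelabelCompat (P : List ℕ → ℕ → ℕ → List ℕ → Prop) : Prop :=
  ∀ f : ℕ → ℕ, StrictMono f → (∀ x, 0 < x → 0 < f x) →
    ∀ u a b v, P u a b v → P (u.map f) (f a) (f b) (v.map f)

/-- `P` is right-trivial. -/
def RightTrivial (P : List ℕ → ℕ → ℕ → List ℕ → Prop) : Prop :=
  ∀ u a b v, P u a b v → P u a b []

/-- Lexicographic order on words. -/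
def LexLE (x y : List ℕ) : Prop := x = y ∨ List.Lex (· < ·) x y

namespace FLC

def upd (c : ℕ → ℕ) (a : ℕ) : ℕ → ℕ := fun b => if b = a then c b + 1 else c b

def FC (k : ℕ) : (ℕ → ℕ) → List ℕ → List ℕ
  | _, [] => []
  | c, a :: t => if c a < k then a :: FC k (upd c a) t else FC k (upd c a) t

@[simp] lemma FC_nil (k : ℕ) (c : ℕ → ℕ) : FC k c [] = [] := rfl

lemma FC_cons (k : ℕ) (c : ℕ → ℕ) (a : ℕ) (t : List ℕ) :
    FC k c (a :: t) = if c a < k then a :: FC k (upd c a) t else FC k (upd c a) t := rfl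

lemma first_aux (k : ℕ) : ∀ (u : List ℕ) (c : ℕ → ℕ),
    ((List.range u.length).filterMap fun p =>
      if c (u.getD p 0) + (u.take p).count (u.getD p 0) < k then some (u.getD p 0) else none)
      = FC k c u := by
  intro u
  induction u with
  | nil => intro c; rfl
  | cons a t ih =>
    intro c
    rw [List.length_cons, List.range_succ_eq_map, List.filterMap_cons, List.filterMap_map]
    have h2 : (List.filterMap
        ((fun p => if c ((a::t).getD p 0) + ((a::t).take p).count ((a::t).getD p 0) < k
            then some ((a::t).getD p 0) else none) ∘ Nat.succ) (List.range t.length))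
        = FC k (upd c a) t := by
      rw [← ih (upd c a)]
      apply List.filterMap_congr
      intro p _
      simp only [Function.comp_apply, List.getD_cons_succ, List.take_succ_cons,
        List.count_cons]
      have he : c (t.getD p 0) + (List.count (t.getD p 0) (List.take p t)
            + if (a == t.getD p 0) = true then 1 else 0)
          = upd c a (t.getD p 0) + List.count (t.getD p 0) (List.take p t) := by
        simp only [upd, beq_iff_eq]
        split_ifs <;> omega
      rw [he]
    simp only [List.getD_cons_zero, List.take_zero, List.count_nil, Nat.add_zero, h2, FC_cons]
    by_cases h : c a < k <;> simp [h]

lemma first_eq_FC (k : ℕ) (u : List ℕ) : First k u = FC k (fun _ => 0) u := by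
  rw [First, ← first_aux k u (fun _ => 0)]
  apply List.filterMap_congr
  intros; simp


lemma count_FC (k : ℕ) : ∀ (u : List ℕ) (c : ℕ → ℕ) (x : ℕ),
    (FC k c u).count x = min (c x + u.count x) k - c x := by
  intro u
  induction u with
  | nil => intro c x; simp
  | cons a t ih =>
    intro c x
    rw [FC_cons]
    by_cases h : c a < k
    · rw [if_pos h, List.count_cons, ih, List.count_cons]
      by_cases hx : x = a
      · subst hx; simp [upd]; omega
      · have h1 : (a == x) = false := by simp [Ne.symm hx]
        simp [h1, upd, hx]
    · rw [if_neg h, ih, List.count_cons]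
      by_cases hx : x = a
      · subst hx; simp [upd]; omega
      · have h1 : (a == x) = false := by simp [Ne.symm hx]
        simp [h1, upd, hx]

lemma FC_ext (k : ℕ) : ∀ (u : List ℕ) (c c₂ : ℕ → ℕ),
    (∀ a ∈ u, c a = c₂ a ∨ (k ≤ c a ∧ k ≤ c₂ a)) → FC k c u = FC k c₂ u := by
  intro u
  induction u with
  | nil => intros; rfl
  | cons a t ih =>
    intro c c₂ h
    have hrec : FC k (upd c a) t = FC k (upd c₂ a) t := by
      apply ih
      intro b hb
      by_cases hba : b = a
      · subst hba
        rcases h b (List.mem_cons_self) with h' | h'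
        · exact Or.inl (by simp [upd, h'])
        · exact Or.inr (by simp [upd]; omega)
      · simpa [upd, hba] using h b (List.mem_cons_of_mem _ hb)
    rcases h a (List.mem_cons_self) with h' | h'
    · rw [FC_cons, FC_cons, h', hrec]
    · rw [FC_cons, FC_cons, if_neg (by omega), if_neg (by omega), hrec]

lemma FC_append (k : ℕ) : ∀ (x y : List ℕ) (c : ℕ → ℕ),
    FC k c (x ++ y) = FC k c x ++ FC k (fun b => c b + x.count b) y := by
  intro x
  induction x with
  | nil => intro y c; simp
  | cons a t ih =>
    intro y c
    rw [List.cons_append, FC_cons, FC_cons, ih]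
    have he : (fun b => upd c a b + t.count b) = fun b => c b + (a :: t).count b := by
      funext b
      simp only [upd, List.count_cons, beq_iff_eq]
      split_ifs <;> omega
    rw [he]
    split_ifs <;> simp

lemma FC_nil_of_dead (k : ℕ) : ∀ (z : List ℕ) (c : ℕ → ℕ),
    (∀ a ∈ z, k ≤ c a) → FC k c z = [] := by
  intro z
  induction z with
  | nil => intros; rfl
  | cons a t ih =>
    intro c h
    rw [FC_cons, if_neg (by have := h a (List.mem_cons_self); omega)]
    apply ih
    intro b hb
    have := h b (List.mem_cons_of_mem _ hb)
    simp only [upd]; split_ifs <;> omega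

lemma FC_map (k : ℕ) (f : ℕ → ℕ) (hf : Function.Injective f) :
    ∀ (u : List ℕ) (c : ℕ → ℕ), FC k c (u.map f) = (FC k (c ∘ f) u).map f := by
  intro u
  induction u with
  | nil => intros; rfl
  | cons a t ih =>
    intro c
    have he : upd c (f a) ∘ f = upd (c ∘ f) a := by
      funext b
      simp only [upd, Function.comp_apply]
      by_cases hb : b = a
      · simp [hb]
      · rw [if_neg hb, if_neg (fun h => hb (hf h))]
    by_cases h : c (f a) < k
    · rw [List.map_cons, FC_cons, FC_cons, if_pos h, if_pos (show (c ∘ f) a < k from h),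
        ih, he, List.map_cons]
    · rw [List.map_cons, FC_cons, FC_cons, if_neg h, if_neg (show ¬ (c ∘ f) a < k from h),
        ih, he]

lemma cond_iff (k j T q : ℕ) (hj : j < k) :
    (j * T + q < k) ↔ (q < k ∧ j * min T k + min q k < k) := by
  rcases Nat.lt_or_ge T k with h | h
  · have hmin : min T k = T := by omega
    rw [hmin]
    generalize j * T = A
    omega
  · have hmin : min T k = k := by omega
    rw [hmin]
    rcases Nat.eq_zero_or_pos j with hj0 | hj0
    · subst hj0; simp only [Nat.zero_mul, Nat.zero_add]; omega
    · have h1 : k ≤ j * T := le_trans h (Nat.le_mul_of_pos_left T hj0)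
      have h2 : k ≤ j * k := Nat.le_mul_of_pos_left k hj0
      generalize j * T = A at h1 ⊢
      generalize j * k = B at h2 ⊢
      omega

lemma FC_Q (k j : ℕ) (hj : j < k) : ∀ (t : List ℕ) (p : ℕ → ℕ),
    FC k (fun x => j * (p x + t.count x) + p x) t
      = FC k (fun x => j * min (p x + t.count x) k + min (p x) k) (FC k p t) := by
  intro t
  induction t with
  | nil => intros; rfl
  | cons a t ih =>
    intro p
    have hcnt : (a :: t).count a = t.count a + 1 := by simp [List.count_cons]
    have hcnt' : ∀ x, x ≠ a → (a :: t).count x = t.count x := by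
      intro x hx; simp [List.count_cons, Ne.symm hx]
    have hLstate : upd (fun x => j * (p x + (a :: t).count x) + p x) a
        = fun x => j * (upd p a x + t.count x) + upd p a x := by
      funext x
      rcases eq_or_ne x a with hx | hx
      · subst hx
        simp [upd, hcnt]
        ring
      · simp only [upd, if_neg hx, hcnt' x hx]
    by_cases hpa : p a < k
    · have hRstate : upd (fun x => j * min (p x + (a :: t).count x) k + min (p x) k) a
          = fun x => j * min (upd p a x + t.count x) k + min (upd p a x) k := by
        funext x
        rcases eq_or_ne x a with hx | hx
        · subst hx
          simp only [upd, if_pos rfl, hcnt, if_true]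
          have h2 : p x + (t.count x + 1) = p x + 1 + t.count x := by omega
          rw [h2]
          generalize j * ((p x + 1 + t.count x) ⊓ k) = A
          omega
        · simp only [upd, if_neg hx, hcnt' x hx]
      have hiff := cond_iff k j (p a + (a :: t).count a) (p a) hj
      rw [FC_cons k p, if_pos hpa]
      by_cases hL : j * (p a + (a :: t).count a) + p a < k
      · rw [FC_cons, if_pos hL, FC_cons, if_pos (hiff.mp hL).2, hLstate, hRstate, ih]
      · rw [FC_cons, if_neg hL, FC_cons,
          if_neg (fun hc => hL (hiff.mpr ⟨hpa, hc⟩)), hLstate, hRstate, ih]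
    · have hL : ¬ (j * (p a + (a :: t).count a) + p a < k) := by
        have : p a ≤ j * (p a + (a :: t).count a) + p a := Nat.le_add_left _ _
        omega
      have hRstate : (fun x => j * min (p x + (a :: t).count x) k + min (p x) k)
          = fun x => j * min (upd p a x + t.count x) k + min (upd p a x) k := by
        funext x
        rcases eq_or_ne x a with hx | hx
        · subst hx
          simp only [upd, if_pos rfl, hcnt, if_true]
          have h2 : p x + (t.count x + 1) = p x + 1 + t.count x := by omega
          have h3 : p x ⊓ k = (p x + 1) ⊓ k := by omega
          rw [h2, h3]
        · simp only [upd, if_neg hx, hcnt' x hx]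
      rw [FC_cons k p, if_neg hpa, FC_cons, if_neg hL, hLstate, hRstate, ih]

def hmap (i m' : ℕ) (a : ℕ) : ℕ := if i < a then a + (m' - 1) else a

def gw (i m' : ℕ) (w : List ℕ) (a : ℕ) : List ℕ := if a = i then w else [hmap i m' a]

def Cw (i m' : ℕ) (w : List ℕ) (c : ℕ → ℕ) : ℕ → ℕ :=
  fun x => if x < i then c x else if x < i + m' then c i * w.count x else c (x - (m' - 1))

lemma Cw_zero (i m' : ℕ) (w : List ℕ) : Cw i m' w (fun _ => 0) = fun _ => 0 := by
  funext x; simp [Cw]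

lemma Cw_hmap (i m' : ℕ) (w : List ℕ) (c : ℕ → ℕ) (a : ℕ) (ha : a ≠ i) :
    Cw i m' w c (hmap i m' a) = c a := by
  rcases Nat.lt_or_ge a i with h | h
  · rw [show hmap i m' a = a from if_neg (by omega)]
    simp only [Cw]
    rw [if_pos h]
  · have ha' : i < a := by omega
    rw [show hmap i m' a = a + (m' - 1) from if_pos ha']
    simp only [Cw]
    rw [if_neg (by omega), if_neg (by omega)]
    exact congrArg c (by omega)

lemma Cw_upd_ne (i m' : ℕ) (w : List ℕ) (c : ℕ → ℕ) (a : ℕ) (ha : a ≠ i) :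
    Cw i m' w (upd c a) = upd (Cw i m' w c) (hmap i m' a) := by
  funext x
  rcases Nat.lt_or_ge a i with h | h
  · rw [show hmap i m' a = a from if_neg (by omega)]
    simp only [Cw, upd]
    split_ifs <;> first | rfl | (exfalso; omega)
  · have ha' : i < a := by omega
    rw [show hmap i m' a = a + (m' - 1) from if_pos ha']
    simp only [Cw, upd]
    split_ifs <;> first | rfl | (exfalso; omega) | (exact congrArg (fun y => c y + 1) (by omega)) |
      (exact congrArg c (by omega))

lemma Cw_upd_i (i m' : ℕ) (hm' : 1 ≤ m') (w : List ℕ)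
    (hw : ∀ x ∈ w, i ≤ x ∧ x < i + m') (c : ℕ → ℕ) :
    Cw i m' w (upd c i) = fun b => Cw i m' w c b + w.count b := by
  funext x
  simp only [Cw, upd]
  rcases Nat.lt_or_ge x i with h | h
  · have hx : w.count x = 0 := List.count_eq_zero.2 fun hm => by have := hw x hm; omega
    simp [h, hx, show x ≠ i by omega]
  · rcases Nat.lt_or_ge x (i + m') with h2 | h2
    · simp [show ¬ x < i by omega, h2, Nat.succ_mul]
    · have hx : w.count x = 0 := List.count_eq_zero.2 fun hm => by have := hw x hm; omega
      simp [show ¬ x < i by omega, show ¬ x < i + m' by omega, hx,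
        show x - (m' - 1) ≠ i by omega]

lemma dead_step (k i m' : ℕ) (hm' : 1 ≤ m') (w : List ℕ)
    (hw : ∀ x ∈ w, i ≤ x ∧ x < i + m') (c : ℕ → ℕ) (a : ℕ) (t : List ℕ)
    (hdead : k ≤ c a) :
    FC k (Cw i m' w c) ((a :: t).flatMap (gw i m' w))
      = FC k (Cw i m' w (upd c a)) (t.flatMap (gw i m' w)) := by
  rw [List.flatMap_cons]
  by_cases hai : a = i
  · subst hai
    rw [show gw a m' w a = w from by simp [gw], FC_append]
    have h1 : FC k (Cw a m' w c) w = [] := by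
      apply FC_nil_of_dead
      intro x hx
      have hr := hw x hx
      have hcp : 0 < w.count x := List.count_pos_iff.2 hx
      have : c a ≤ c a * w.count x := Nat.le_mul_of_pos_right _ hcp
      simp only [Cw, if_neg (show ¬ x < a by omega), if_pos hr.2]
      omega
    rw [h1, List.nil_append, Cw_upd_i a m' hm' w hw c]
  · rw [show gw i m' w a = [hmap i m' a] from by simp [gw, hai], List.singleton_append,
      FC_cons, if_neg (by rw [Cw_hmap i m' w c a hai]; omega), Cw_upd_ne i m' w c a hai]

lemma live_step_ne (k i m' : ℕ) (w : List ℕ) (c : ℕ → ℕ) (a : ℕ) (t : List ℕ)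
    (hai : a ≠ i) (hlive : c a < k) :
    FC k (Cw i m' w c) ((a :: t).flatMap (gw i m' w))
      = hmap i m' a :: FC k (Cw i m' w (upd c a)) (t.flatMap (gw i m' w)) := by
  rw [List.flatMap_cons, show gw i m' w a = [hmap i m' a] from by simp [gw, hai],
    List.singleton_append, FC_cons, if_pos (by rw [Cw_hmap i m' w c a hai]; omega),
    Cw_upd_ne i m' w c a hai]

lemma live_step_i (k i m' : ℕ) (hm' : 1 ≤ m') (w : List ℕ)
    (hw : ∀ x ∈ w, i ≤ x ∧ x < i + m') (c : ℕ → ℕ) (t : List ℕ) (hlive : c i < k) :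
    FC k (Cw i m' w c) ((i :: t).flatMap (gw i m' w))
      = FC k (Cw i m' w c) w ++ FC k (Cw i m' w (upd c i)) (t.flatMap (gw i m' w)) := by
  rw [List.flatMap_cons, show gw i m' w i = w from by simp [gw], FC_append,
    Cw_upd_i i m' hm' w hw c]

lemma block_eq (k i m' : ℕ) (w w₂ : List ℕ)
    (hw : ∀ x ∈ w, i ≤ x ∧ x < i + m') (hw₂ : ∀ x ∈ w₂, i ≤ x ∧ x < i + m')
    (hFw : FC k (fun _ => 0) w = FC k (fun _ => 0) w₂)
    (c c₂ : ℕ → ℕ) (hci : c i = c₂ i) (hlt : c i < k) :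
    FC k (Cw i m' w c) w = FC k (Cw i m' w₂ c₂) w₂ := by
  have hcnt : ∀ x, min (w.count x) k = min (w₂.count x) k := by
    intro x
    have h1 := count_FC k w (fun _ => 0) x
    have h2 := count_FC k w₂ (fun _ => 0) x
    rw [hFw] at h1
    simp only [Nat.zero_add, Nat.sub_zero] at h1 h2
    omega
  have key : ∀ (z : List ℕ) (d : ℕ → ℕ), (∀ x ∈ z, i ≤ x ∧ x < i + m') → d i < k →
      FC k (Cw i m' z d) z = FC k (fun x => d i * min (z.count x) k) (FC k (fun _ => 0) z) := by
    intro z d hz hd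
    have e1 : FC k (Cw i m' z d) z = FC k (fun x => d i * z.count x) z := by
      apply FC_ext
      intro x hx
      have hr := hz x hx
      exact Or.inl (by simp only [Cw, if_neg (show ¬ x < i by omega), if_pos hr.2])
    have e2 := FC_Q k (d i) hd z (fun _ => 0)
    simp only [Nat.zero_add, Nat.min_self, Nat.zero_min, Nat.add_zero] at e2
    rw [e1, e2]
  rw [key w c hw hlt, key w₂ c₂ hw₂ (hci ▸ hlt), hFw, hci]
  congr 1
  funext x
  rw [hcnt x]

lemma master (k i m' : ℕ) (hm' : 1 ≤ m') (w w₂ : List ℕ)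
    (hw : ∀ x ∈ w, i ≤ x ∧ x < i + m') (hw₂ : ∀ x ∈ w₂, i ≤ x ∧ x < i + m')
    (hFw : FC k (fun _ => 0) w = FC k (fun _ => 0) w₂) :
    ∀ (N : ℕ) (u u₂ : List ℕ) (c c₂ : ℕ → ℕ), u.length + u₂.length ≤ N →
      (∀ x, c x = c₂ x ∨ (k ≤ c x ∧ k ≤ c₂ x)) →
      FC k c u = FC k c₂ u₂ →
      FC k (Cw i m' w c) (u.flatMap (gw i m' w))
        = FC k (Cw i m' w₂ c₂) (u₂.flatMap (gw i m' w₂)) := by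
  intro N
  induction N with
  | zero =>
    intro u u₂ c c₂ hlen
    rw [show u = [] from by cases u <;> simp_all,
      show u₂ = [] from by cases u₂ <;> simp_all]
    intros; rfl
  | succ N ih =>
    intro u u₂ c c₂ hlen hag hF
    by_cases hdl : ∃ a t, u = a :: t ∧ k ≤ c a
    · obtain ⟨a, t, rfl, hdead⟩ := hdl
      rw [dead_step k i m' hm' w hw c a t hdead]
      apply ih t u₂ (upd c a) c₂ (by simp at hlen ⊢; omega)
      · intro x
        rcases eq_or_ne x a with hx | hx
        · subst hx
          rcases hag x with h | h
        
          · exact Or.inr (by simp [upd]; omega)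
          · exact Or.inr (by simp [upd]; omega)
        · simpa [upd, hx] using hag x
      · rw [← hF, FC_cons, if_neg (by omega)]
    · by_cases hdr : ∃ a t, u₂ = a :: t ∧ k ≤ c₂ a
      · obtain ⟨a, t, rfl, hdead⟩ := hdr
        rw [dead_step k i m' hm' w₂ hw₂ c₂ a t hdead]
        apply ih u t c (upd c₂ a) (by simp at hlen ⊢; omega)
        · intro x
          rcases eq_or_ne x a with hx | hx
          · subst hx
            rcases hag x with h | h
            · exact Or.inr (by simp [upd]; omega)
            · exact Or.inr (by simp [upd]; omega)
          · simpa [upd, hx] using hag x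
        · rw [hF, FC_cons, if_neg (by omega)]
      · -- both heads are live (or lists empty)
        match u, u₂ with
        | [], [] => rfl
        | [], a₂ :: t₂ =>
          exfalso
          have hlive : c₂ a₂ < k := by
            by_contra hcon
            exact hdr ⟨a₂, t₂, rfl, by omega⟩
          rw [FC_cons, if_pos hlive] at hF
          exact (List.cons_ne_nil _ _ (hF.symm)).elim
        | a :: t, [] =>
          exfalso
          have hlive : c a < k := by
            by_contra hcon
            exact hdl ⟨a, t, rfl, by omega⟩
          rw [FC_cons, if_pos hlive] at hF
          exact (List.cons_ne_nil _ _ hF).elim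
        | a :: t, a₂ :: t₂ =>
          have hlive : c a < k := by
            by_contra hcon
            exact hdl ⟨a, t, rfl, by omega⟩
          have hlive₂ : c₂ a₂ < k := by
            by_contra hcon
            exact hdr ⟨a₂, t₂, rfl, by omega⟩
          rw [FC_cons, if_pos hlive, FC_cons, if_pos hlive₂] at hF
          obtain ⟨rfl, hFt⟩ := List.cons_eq_cons.mp hF
          have hca : c a = c₂ a := by
            rcases hag a with h | h
            · exact h
            · omega
          have hagu : ∀ x, upd c a x = upd c₂ a x ∨ (k ≤ upd c a x ∧ k ≤ upd c₂ a x) := by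
            intro x
            rcases eq_or_ne x a with hx | hx
            · subst hx
              rcases hag x with h | h
              · exact Or.inl (by simp [upd, h])
              · exact Or.inr (by simp [upd]; omega)
            · simpa [upd, hx] using hag x
          have hlen' : t.length + t₂.length ≤ N := by simp at hlen; omega
          by_cases hai : a = i
          · subst hai
            rw [live_step_i k a m' hm' w hw c t hlive,
              live_step_i k a m' hm' w₂ hw₂ c₂ t₂ hlive₂]
            rw [block_eq k a m' w w₂ hw hw₂ hFw c c₂ hca hlive]
            rw [ih t t₂ (upd c a) (upd c₂ a) hlen' hagu hFt]
          · rw [live_step_ne k i m' w c a t hai hlive,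
              live_step_ne k i m' w₂ c₂ a t₂ hai hlive₂]
            rw [ih t t₂ (upd c a) (upd c₂ a) hlen' hagu hFt]

lemma le_maxLetter : ∀ {v : List ℕ} {a : ℕ}, a ∈ v → a ≤ maxLetter v := by
  intro v
  induction v with
  | nil => intro a ha; simp at ha
  | cons b t ih =>
    intro a ha
    rcases List.mem_cons.mp ha with h | h
    · subst h; simp [maxLetter]
    · have := ih h
      simp only [maxLetter, List.foldr_cons] at *
      omega

lemma maxLetter_le {v : List ℕ} {m : ℕ} (h : ∀ a ∈ v, a ≤ m) : maxLetter v ≤ m := by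
  induction v with
  | nil => simp [maxLetter]
  | cons b t ih =>
    have h1 := h b (List.mem_cons_self)
    have h2 := ih fun a ha => h a (List.mem_cons_of_mem _ ha)
    simp only [maxLetter, List.foldr_cons] at *
    omega

lemma maxLetter_packed {v : List ℕ} {m : ℕ} (hv : IsPackedOn m v) (hm : 1 ≤ m) :
    maxLetter v = m := by
  apply le_antisymm
  · exact maxLetter_le fun a ha =>
      (Finset.mem_Icc.mp (hv ▸ List.mem_toFinset.mpr ha)).2
  · exact le_maxLetter (List.mem_toFinset.mp (hv ▸ Finset.mem_Icc.mpr ⟨hm, le_refl m⟩))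

end FLC


/-- For every `k ≥ 1`, the relation `≡_k` (equality of the `First_k` projections) is a
congruence for the left composition of packed words. -/
theorem first_leftComp_congruence (k : ℕ) (hk : 1 ≤ k) (n m i : ℕ)
    (u u' v v' : List ℕ)
    (hu : IsPackedOn n u) (hu' : IsPackedOn n u')
    (hv : IsPackedOn m v) (hv' : IsPackedOn m v')
    (hi : i ∈ Finset.Icc 1 n) (hm : 1 ≤ m)
    (h1 : First k u = First k u') (h2 : First k v = First k v') :
    First k (leftComp u i v) = First k (leftComp u' i v') := by
  open FLC in
  have hi1 : 1 ≤ i := (Finset.mem_Icc.mp hi).1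
  have hmv : maxLetter v = m := FLC.maxLetter_packed hv hm
  have hmv' : maxLetter v' = m := FLC.maxLetter_packed hv' hm
  set f : ℕ → ℕ := fun a => if 0 < a then a + (i - 1) else a with hf
  have hfinj : Function.Injective f := by
    intro x y h
    simp only [hf] at h
    split_ifs at h <;> omega
  set w : List ℕ := Inc (i - 1) 0 v with hwdef
  set w₂ : List ℕ := Inc (i - 1) 0 v' with hw₂def
  have hwm : w = v.map f := rfl
  have hw₂m : w₂ = v'.map f := rfl
  -- letters of w and w₂
  have hwlet : ∀ x ∈ w, i ≤ x ∧ x < i + m := by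
    intro x hx
    rw [hwm] at hx
    obtain ⟨b, hb, rfl⟩ := List.mem_map.mp hx
    have hbm : b ∈ Finset.Icc 1 m := hv ▸ List.mem_toFinset.mpr hb
    rw [Finset.mem_Icc] at hbm
    simp only [hf]
    rw [if_pos (by omega)]
    omega
  have hw₂let : ∀ x ∈ w₂, i ≤ x ∧ x < i + m := by
    intro x hx
    rw [hw₂m] at hx
    obtain ⟨b, hb, rfl⟩ := List.mem_map.mp hx
    have hbm : b ∈ Finset.Icc 1 m := hv' ▸ List.mem_toFinset.mpr hb
    rw [Finset.mem_Icc] at hbm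
    simp only [hf]
    rw [if_pos (by omega)]
    omega
  have hzf : ((fun _ => 0) : ℕ → ℕ) ∘ f = fun _ => 0 := rfl
  have hFw : FC k (fun _ => 0) w = FC k (fun _ => 0) w₂ := by
    rw [hwm, hw₂m, FC_map k f hfinj, FC_map k f hfinj, hzf]
    rw [← first_eq_FC, ← first_eq_FC, h2]
  -- rewrite leftComp as flatMap over gw
  have hlc : leftComp u i v = u.flatMap (gw i m w) := by
    rw [leftComp]
    congr 1
    funext a
    simp only [gw, hmap, hmv, hwdef]
  have hlc' : leftComp u' i v' = u'.flatMap (gw i m w₂) := by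
    rw [leftComp]
    congr 1
    funext a
    simp only [gw, hmap, hmv', hw₂def]
  rw [hlc, hlc', first_eq_FC, first_eq_FC]
  have hmain := master k i m hm w w₂ hwlet hw₂let hFw (u.length + u'.length) u u'
    (fun _ => 0) (fun _ => 0) (le_refl _) (fun x => Or.inl rfl)
    (by rw [← first_eq_FC, ← first_eq_FC]; exact h1)
  rw [Cw_zero, Cw_zero] at hmain
  exact hmain
end

section
/- The map First_1 is a morphism from the left composition of packed words to the left composition of permutations: for packed words u with letter set {1,…,n} and v with letter set {1,…,m}, and i ∈ {1,…,n}, one has First_1(u ∘←_i v) = First_1(u) ∘←_i First_1(v). In particular, First_1(u) and First_1(v) are permutations of {1,…,n} and {1,…,m} respectively, and the quotient of the left operad of packed words by ≡_1 is the left associative operad of permutations. -/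
def fo : List ℕ → List ℕ
  | [] => []
  | a :: l => a :: (fo l).filter (· ≠ a)

theorem fo_nil : fo [] = [] := rfl

theorem fo_cons (a : ℕ) (l : List ℕ) : fo (a :: l) = a :: (fo l).filter (· ≠ a) := rfl

theorem mem_fo {b : ℕ} : ∀ {l : List ℕ}, b ∈ fo l ↔ b ∈ l
  | [] => Iff.rfl
  | a :: l => by
    simp only [fo, List.mem_cons, List.mem_filter, mem_fo (l := l), decide_eq_true_eq]
    by_cases h : b = a <;> simp [h]

theorem fo_nodup : ∀ l : List ℕ, (fo l).Nodup
  | [] => List.nodup_nil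
  | a :: l => by
    simp only [fo, List.nodup_cons]
    refine ⟨?_, (fo_nodup l).filter _⟩
    simp

theorem fo_toFinset (l : List ℕ) : (fo l).toFinset = l.toFinset := by
  ext b; simp [mem_fo]

theorem fo_append (s t : List ℕ) :
    fo (s ++ t) = fo s ++ (fo t).filter (fun b => b ∉ s) := by
  induction s with
  | nil => simp [fo]
  | cons a s ih =>
    rw [List.cons_append]
    show a :: (fo (s ++ t)).filter (· ≠ a)
      = (a :: (fo s).filter (· ≠ a)) ++ (fo t).filter (fun b => b ∉ a :: s)
    rw [ih, List.filter_append, List.filter_filter, List.cons_append]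
    have : ((fo t).filter fun b => decide (b ≠ a) && decide (b ∉ s))
        = (fo t).filter (fun b => b ∉ a :: s) := by
      apply List.filter_congr
      intro x _
      simp only [List.mem_cons, not_or, Bool.decide_and, decide_not]
    rw [this]

theorem fo_map (g : ℕ → ℕ) (hg : Function.Injective g) :
    ∀ l : List ℕ, fo (l.map g) = (fo l).map g := by
  intro l
  induction l with
  | nil => rfl
  | cons a l ih =>
    show g a :: (fo (l.map g)).filter (· ≠ g a) = g a :: ((fo l).filter (· ≠ a)).map g
    rw [ih, List.filter_map]
    congr 1
    apply congrArg
    apply List.filter_congr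
    intro x _
    simp [Function.comp, hg.eq_iff]

theorem filterMap_if_filter (g : ℕ → ℕ) (c : ℕ → Prop) [DecidablePred c] (a : ℕ) :
    ∀ s : List ℕ,
      ((s.filterMap fun p => if c p then some (g p) else none).filter (· ≠ a))
        = s.filterMap fun p => if c p ∧ g p ≠ a then some (g p) else none := by
  intro s
  induction s with
  | nil => simp
  | cons p s ih =>
    simp only [ne_eq, decide_not] at ih
    by_cases hc : c p <;> by_cases hq : g p = a <;>
      simp [hc, hq, List.filterMap_cons, List.filter_cons, ih]

theorem first_one_cons (a : ℕ) (l : List ℕ) :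
    First 1 (a :: l) = a :: (First 1 l).filter (· ≠ a) := by
  rw [First, List.length_cons, List.range_succ_eq_map, List.filterMap_cons,
    List.filterMap_map]
  simp only [List.take_zero, List.count_nil, List.getD_cons_zero, Nat.lt_irrefl,
    if_pos Nat.zero_lt_one]
  congr 1
  rw [First, filterMap_if_filter (fun p => l.getD p 0) (fun p => (l.take p).count (l.getD p 0) < 1) a]
  apply List.filterMap_congr
  intro p _
  simp only [Function.comp]
  rw [show ((a :: l).take (p + 1)) = a :: l.take p from rfl]
  have : (a :: l).getD (p+1) 0 = l.getD p 0 := rfl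
  rw [this]
  apply if_congr _ rfl rfl
  rw [List.count_cons]
  by_cases hxa : l.getD p 0 = a <;> simp [hxa] <;> omega

theorem first_eq_fo : ∀ l : List ℕ, First 1 l = fo l
  | [] => by simp [First, fo]
  | a :: l => by rw [first_one_cons, first_eq_fo l]; rfl

theorem le_maxLetter_s18 {x : ℕ} : ∀ {l : List ℕ}, x ∈ l → x ≤ maxLetter l
  | a :: l, h => by
    rcases List.mem_cons.mp h with h | h
    · simp [maxLetter, h]
    · have := le_maxLetter_s18 h
      simp only [maxLetter, List.foldr_cons] at *
      omega

theorem maxLetter_mem_s18 : ∀ l : List ℕ, maxLetter l ∈ l ∨ maxLetter l = 0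
  | [] => Or.inr rfl
  | a :: l => by
    have : maxLetter (a :: l) = max a (maxLetter l) := rfl
    rcases Nat.le_total a (maxLetter l) with h | h
    · rcases maxLetter_mem_s18 l with h' | h'
      · rw [this, Nat.max_eq_right h]; exact Or.inl (List.mem_cons_of_mem _ h')
      · left
        rw [this, h']
        simp
    · rw [this, Nat.max_eq_left h]; exact Or.inl (List.mem_cons_self)

theorem maxLetter_of_Icc {l : List ℕ} {m : ℕ} (h : l.toFinset = Finset.Icc 1 m)
    (hm : 1 ≤ m) : maxLetter l = m := by
  have hml : m ∈ l := by
    rw [← List.mem_toFinset, h, Finset.mem_Icc]; omega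
  have h1 : m ≤ maxLetter l := le_maxLetter_s18 hml
  rcases maxLetter_mem_s18 l with h' | h'
  · have : maxLetter l ∈ Finset.Icc 1 m := by rw [← h, List.mem_toFinset]; exact h'
    rw [Finset.mem_Icc] at this; omega
  · omega

def F (i m : ℕ) (v : List ℕ) (a : ℕ) : List ℕ :=
  if a = i then Inc (i - 1) 0 v else [if i < a then a + (m - 1) else a]

theorem F_disjoint {i m : ℕ} {v : List ℕ} (hi : 1 ≤ i) (hm : 1 ≤ m)
    (hv : ∀ x ∈ v, 1 ≤ x ∧ x ≤ m) {a c b : ℕ} (ha : 1 ≤ a) (hc : 1 ≤ c)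
    (hba : b ∈ F i m v a) (hbc : b ∈ F i m v c) : a = c := by
  unfold F Inc at hba hbc
  by_cases h1 : a = i <;> by_cases h2 : c = i
  · rw [h1, h2]
  · rw [if_pos h1] at hba
    rw [if_neg h2] at hbc
    simp only [List.mem_map] at hba
    simp only [List.mem_singleton] at hbc
    obtain ⟨x, hx, hbx⟩ := hba
    have hxb := hv x hx
    split_ifs at hbx hbc <;> omega
  · rw [if_neg h1] at hba
    rw [if_pos h2] at hbc
    simp only [List.mem_map] at hbc
    simp only [List.mem_singleton] at hba
    obtain ⟨x, hx, hbx⟩ := hbc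
    have hxb := hv x hx
    split_ifs at hbx hba <;> omega
  · rw [if_neg h1] at hba
    rw [if_neg h2] at hbc
    simp only [List.mem_singleton] at hba hbc
    split_ifs at hba hbc <;> omega

theorem mem_F_fo {i m : ℕ} {v : List ℕ} {a b : ℕ}
    (h : b ∈ F i m (fo v) a) : b ∈ F i m v a := by
  unfold F Inc at h ⊢
  by_cases hai : a = i
  · rw [if_pos hai] at h ⊢
    simp only [List.mem_map] at h ⊢
    obtain ⟨x, hx, hbx⟩ := h
    exact ⟨x, mem_fo.mp hx, hbx⟩
  · rw [if_neg hai] at h ⊢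
    exact h

theorem filter_flatMap (p : ℕ → Bool) (f : ℕ → List ℕ) :
    ∀ l : List ℕ, (l.flatMap f).filter p = l.flatMap fun a => (f a).filter p := by
  intro l
  induction l with
  | nil => rfl
  | cons a l ih => simp [List.flatMap_cons, List.filter_append, ih]

theorem flatMap_congr_filter (G : ℕ → List ℕ) (p : ℕ → Bool) (a : ℕ) :
    ∀ w : List ℕ, (∀ c ∈ w, (G c).filter p = if c = a then [] else G c) →
      (w.flatMap fun c => (G c).filter p) = (w.filter (· ≠ a)).flatMap G := by
  intro w
  induction w with
  | nil => intro _; rfl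
  | cons c w ih =>
    intro h
    rw [List.flatMap_cons, List.filter_cons]
    by_cases hca : c = a
    · rw [h c (List.mem_cons_self), if_pos hca, if_neg (by simp [hca])]
      exact ih fun d hd => h d (List.mem_cons_of_mem _ hd)
    · rw [h c (List.mem_cons_self), if_neg hca, if_pos (by simp [hca]),
        List.flatMap_cons, ih fun d hd => h d (List.mem_cons_of_mem _ hd)]

theorem fo_F (i m : ℕ) (v : List ℕ) (a : ℕ) : fo (F i m v a) = F i m (fo v) a := by
  unfold F
  split_ifs with h
  · exact fo_map _ (fun x y hxy => by split_ifs at hxy <;> omega) v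
  all_goals rfl

theorem fo_flatMap_F {i m : ℕ} {v : List ℕ} (hi : 1 ≤ i) (hm : 1 ≤ m)
    (hv : ∀ x ∈ v, 1 ≤ x ∧ x ≤ m) :
    ∀ u : List ℕ, (∀ a ∈ u, 1 ≤ a) →
      fo (u.flatMap (F i m v)) = (fo u).flatMap (F i m (fo v)) := by
  intro u
  induction u with
  | nil => intro _; rfl
  | cons a u ih =>
    intro h
    have ha : 1 ≤ a := h a (List.mem_cons_self)
    rw [List.flatMap_cons, fo_append, ih fun c hc => h c (List.mem_cons_of_mem _ hc)]
    show fo (F i m v a) ++ _ = F i m (fo v) a ++ ((fo u).filter (· ≠ a)).flatMap (F i m (fo v))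
    rw [fo_F]
    congr 1
    rw [filter_flatMap]
    apply flatMap_congr_filter
    intro c hc
    have hc1 : 1 ≤ c := h c (List.mem_cons_of_mem _ (mem_fo.mp hc))
    by_cases hca : c = a
    · rw [if_pos hca]
      apply List.filter_eq_nil_iff.mpr
      intro b hb
      subst hca
      simp [mem_F_fo hb]
    · rw [if_neg hca]
      apply List.filter_eq_self.mpr
      intro b hb
      simp only [decide_eq_true_eq]
      intro hbFa
      exact hca (F_disjoint hi hm hv hc1 ha (mem_F_fo hb) hbFa)

/-- `First_1` is a morphism from the left composition of packed words to the left
composition of permutations; in particular `First_1(u)` and `First_1(v)` are permutation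
words of `{1, …, n}` and `{1, …, m}` respectively. -/
theorem first_one_morphism (n m i : ℕ) (u v : List ℕ)
    (hu : IsPackedOn n u) (hv : IsPackedOn m v)
    (hi : i ∈ Finset.Icc 1 n) (hm : 1 ≤ m) :
    First 1 (leftComp u i v) = leftComp (First 1 u) i (First 1 v) ∧
    IsPermWord n (First 1 u) ∧ IsPermWord m (First 1 v) := by
  obtain ⟨hi1, hin⟩ := Finset.mem_Icc.mp hi
  have hfu : First 1 u = fo u := first_eq_fo u
  have hfv : First 1 v = fo v := first_eq_fo v
  have hvb : ∀ x ∈ v, 1 ≤ x ∧ x ≤ m := by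
    intro x hx
    have hx' : x ∈ Finset.Icc 1 m := by
      rw [← hv, List.mem_toFinset]; exact hx
    exact Finset.mem_Icc.mp hx'
  have hub : ∀ a ∈ u, 1 ≤ a := by
    intro a hau
    have ha' : a ∈ Finset.Icc 1 n := by
      rw [← hu, List.mem_toFinset]; exact hau
    exact (Finset.mem_Icc.mp ha').1
  have hMv : maxLetter v = m := maxLetter_of_Icc hv hm
  have hMfv : maxLetter (fo v) = m :=
    maxLetter_of_Icc (by rw [fo_toFinset]; exact hv) hm
  refine ⟨?_, ⟨?_, ?_⟩, ⟨?_, ?_⟩⟩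
  · rw [first_eq_fo, hfu, hfv]
    simp only [leftComp, hMv, hMfv]
    exact fo_flatMap_F hi1 hm hvb u hub
  · rw [hfu]
    have h1 := List.toFinset_card_of_nodup (fo_nodup u)
    rw [fo_toFinset, hu, Nat.card_Icc] at h1
    omega
  · rw [hfu, fo_toFinset]; exact hu
  · rw [hfv]
    have h1 := List.toFinset_card_of_nodup (fo_nodup v)
    rw [fo_toFinset, hv, Nat.card_Icc] at h1
    omega
  · rw [hfv, fo_toFinset]; exact hv
end
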